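/- The generalized robustness of purity P_R(ρ) := min{x ≥ 0 : ∃ density matrix τ with (ρ + xτ)/(1+x) = 1/d} of a d-dimensional density matrix ρ equals d·λ₁(ρ) − 1, where λ₁(ρ) is the largest eigenvalue of ρ. -/

import Mathlib

open ComplexOrder

/-- A density matrix: positive semidefinite with unit trace. -/
def IsDensityMatrix {d : ℕ} (ρ : Matrix (Fin d) (Fin d) ℂ) : Prop :=
  ρ.PosSemidef ∧ ρ.trace = 1

section Aux
open Matrix
variable {d : ℕ}

lemma trace_eq_sum_eigs {ρ : Matrix (Fin d) (Fin d) ℂ} (h : ρ.IsHermitian) :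
    ρ.trace = ∑ i, (h.eigenvalues i : ℂ) := by
  conv_lhs => rw [h.spectral_theorem, Unitary.conjStarAlgAut_apply]
  rw [Matrix.trace_mul_comm, ← Matrix.mul_assoc, Unitary.coe_star_mul_self, Matrix.one_mul,
    Matrix.trace_diagonal]
  rfl

lemma psd_smul {τ : Matrix (Fin d) (Fin d) ℂ} (hτ : τ.PosSemidef) {x : ℝ} (hx : 0 ≤ x) :
    ((x : ℂ) • τ).PosSemidef := by
  refine Matrix.PosSemidef.of_dotProduct_mulVec_nonneg ?_ (fun v => ?_)
  · unfold Matrix.IsHermitian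
    rw [Matrix.conjTranspose_smul, hτ.1.eq]
    simp
  · rw [Matrix.smul_mulVec, dotProduct_smul, smul_eq_mul]
    exact mul_nonneg (by exact_mod_cast hx) (hτ.dotProduct_mulVec_nonneg v)

lemma smul_one_sub_psd {ρ : Matrix (Fin d) (Fin d) ℂ} (h : ρ.IsHermitian)
    {c : ℝ} (hc : ∀ i, h.eigenvalues i ≤ c) :
    ((c : ℂ) • (1 : Matrix (Fin d) (Fin d) ℂ) - ρ).PosSemidef := by
  have key : (c : ℂ) • (1 : Matrix (Fin d) (Fin d) ℂ) - ρ
      = (h.eigenvectorUnitary : Matrix (Fin d) (Fin d) ℂ) *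
        Matrix.diagonal (fun i => ((c - h.eigenvalues i : ℝ) : ℂ)) *
        (h.eigenvectorUnitary : Matrix (Fin d) (Fin d) ℂ)ᴴ := by
    have hdiag : Matrix.diagonal (fun i : Fin d => ((c - h.eigenvalues i : ℝ) : ℂ))
        = (c : ℂ) • (1 : Matrix (Fin d) (Fin d) ℂ)
          - Matrix.diagonal (RCLike.ofReal ∘ h.eigenvalues) := by
      ext i j
      rcases eq_or_ne i j with rfl | hij
      · simp only [Matrix.diagonal_apply_eq, Matrix.sub_apply, Matrix.smul_apply,
          Matrix.one_apply_eq, smul_eq_mul, mul_one, Function.comp_apply]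
        exact Complex.ofReal_sub _ _
      · simp [Matrix.diagonal_apply_ne _ hij, Matrix.one_apply_ne hij]
    rw [hdiag, Matrix.mul_sub, Matrix.sub_mul, Matrix.mul_smul, Matrix.mul_one,
      Matrix.smul_mul, ← Matrix.star_eq_conjTranspose,
      Matrix.mem_unitaryGroup_iff.mp h.eigenvectorUnitary.2, ← Unitary.conjStarAlgAut_apply (S := ℂ), ← h.spectral_theorem]
  rw [key]
  exact (Matrix.PosSemidef.diagonal fun i =>
    Complex.zero_le_real.2 (by linarith [hc i] : (0:ℝ) ≤ c - h.eigenvalues i)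
    ).mul_mul_conjTranspose_same _

lemma eig_le_of_psd {ρ : Matrix (Fin d) (Fin d) ℂ} (h : ρ.IsHermitian) {c : ℝ}
    (hpsd : ((c : ℂ) • (1 : Matrix (Fin d) (Fin d) ℂ) - ρ).PosSemidef) (i : Fin d) :
    h.eigenvalues i ≤ c := by
  set v := ⇑(h.eigenvectorBasis i) with hv_def
  have hv := hpsd.dotProduct_mulVec_nonneg v
  have hmv0 := h.mulVec_eigenvectorBasis i
  have hmv : ((c : ℂ) • (1 : Matrix (Fin d) (Fin d) ℂ) - ρ) *ᵥ v
      = (((c - h.eigenvalues i : ℝ)) : ℂ) • v := by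
    rw [Matrix.sub_mulVec, Matrix.smul_mulVec, Matrix.one_mulVec, hv_def, hmv0]
    funext j
    simp only [Pi.sub_apply, Pi.smul_apply, smul_eq_mul, Complex.real_smul]
    push_cast
    ring
  have hnorm : dotProduct (star v) v = 1 := by
    have h1 : ‖h.eigenvectorBasis i‖ = 1 := h.eigenvectorBasis.orthonormal.1 i
    have h2 := EuclideanSpace.inner_eq_star_dotProduct (𝕜 := ℂ)
      (h.eigenvectorBasis i) (h.eigenvectorBasis i)
    rw [inner_self_eq_norm_sq_to_K, h1] at h2
    rw [dotProduct_comm]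
    simpa using h2.symm
  rw [hmv, dotProduct_smul, hnorm, smul_eq_mul, mul_one] at hv
  have := Complex.zero_le_real.mp hv
  linarith

lemma eq_smul_one_of_eigs_const {ρ : Matrix (Fin d) (Fin d) ℂ} (h : ρ.IsHermitian) {l : ℝ}
    (hl : ∀ i, h.eigenvalues i = l) :
    ρ = (l : ℂ) • (1 : Matrix (Fin d) (Fin d) ℂ) := by
  have hdiag : Matrix.diagonal (RCLike.ofReal ∘ h.eigenvalues)
      = (l : ℂ) • (1 : Matrix (Fin d) (Fin d) ℂ) := by
    have hfun : (RCLike.ofReal ∘ h.eigenvalues : Fin d → ℂ) = fun _ => (l : ℂ) := by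
      funext i
      exact congrArg _ (hl i)
    rw [hfun, Matrix.smul_one_eq_diagonal]
  conv_lhs => rw [h.spectral_theorem, Unitary.conjStarAlgAut_apply]
  rw [hdiag, Matrix.mul_smul, Matrix.mul_one, Matrix.smul_mul,
    Matrix.mem_unitaryGroup_iff.mp h.eigenvectorUnitary.2]

end Aux

/-- The generalized robustness of purity of a density matrix `ρ` equals
`d·λ₁(ρ) - 1`, where `λ₁(ρ)` is the largest eigenvalue of `ρ`. -/
theorem purity_robustness_eq
    (d : ℕ) (hd : 0 < d)
    (ρ : Matrix (Fin d) (Fin d) ℂ) (hρ : IsDensityMatrix ρ)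
    (hherm : ρ.IsHermitian) :
    sInf {x : ℝ | 0 ≤ x ∧ ∃ τ : Matrix (Fin d) (Fin d) ℂ, IsDensityMatrix τ ∧
        ((1 / (1 + x) : ℂ)) • (ρ + (x : ℂ) • τ) =
          ((1 / (d : ℂ))) • (1 : Matrix (Fin d) (Fin d) ℂ)} =
      d * (⨆ i, hherm.eigenvalues i) - 1 := by
  have hne : Nonempty (Fin d) := ⟨⟨0, hd⟩⟩
  have dpos : (0 : ℝ) < d := by exact_mod_cast hd
  have dC : (d : ℂ) ≠ 0 := by exact_mod_cast dpos.ne'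
  set l : ℝ := ⨆ i, hherm.eigenvalues i with hl
  obtain ⟨i₀, hi₀⟩ := exists_eq_ciSup_of_finite (f := hherm.eigenvalues)
  have hle : ∀ i, hherm.eigenvalues i ≤ l := fun i =>
    le_ciSup (Set.Finite.bddAbove (Set.finite_range _)) i
  have htrR : ∑ i, hherm.eigenvalues i = 1 := by
    have := trace_eq_sum_eigs hherm
    rw [hρ.2] at this
    exact_mod_cast this.symm
  have hlge : 1 ≤ (d : ℝ) * l := by
    calc (1:ℝ) = ∑ i, hherm.eigenvalues i := htrR.symm
    _ ≤ ∑ _i : Fin d, l := Finset.sum_le_sum (fun i _ => hle i)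
    _ = (d : ℝ) * l := by simp [mul_comm]
  have hS : {x : ℝ | 0 ≤ x ∧ ∃ τ : Matrix (Fin d) (Fin d) ℂ, IsDensityMatrix τ ∧
        ((1 / (1 + x) : ℂ)) • (ρ + (x : ℂ) • τ) =
          ((1 / (d : ℂ))) • (1 : Matrix (Fin d) (Fin d) ℂ)}
      = Set.Ici ((d : ℝ) * l - 1) := by
    ext x
    simp only [Set.mem_setOf_eq, Set.mem_Ici]
    constructor
    · rintro ⟨hx0, τ, ⟨hτpsd, hτtr⟩, heq⟩
      have h1x : (1 + (x : ℂ)) ≠ 0 := by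
        intro h
        have : (1 + x : ℝ) = 0 := by exact_mod_cast h
        linarith
      have heq2 : ρ + (x : ℂ) • τ = ((((1 + x)/d : ℝ)) : ℂ) • 1 := by
        have := congrArg (fun M => (1 + (x : ℂ)) • M) heq
        simp only [smul_smul] at this
        rw [mul_one_div, div_self h1x, one_smul] at this
        rw [this]
        congr 1
        push_cast
        ring
      have hpsd : (((((1 + x)/d : ℝ)) : ℂ) • (1 : Matrix (Fin d) (Fin d) ℂ) - ρ).PosSemidef := by
        have : ((((1 + x)/d : ℝ)) : ℂ) • (1 : Matrix (Fin d) (Fin d) ℂ) - ρ = (x : ℂ) • τ := by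
          rw [← heq2]
          exact add_sub_cancel_left ρ _
        rw [this]
        exact psd_smul hτpsd hx0
      have := eig_le_of_psd hherm hpsd i₀
      rw [hi₀, ← hl] at this
      rw [le_div_iff₀ dpos] at this
      linarith
    · intro hx
      have hx0 : 0 ≤ x := le_trans (by linarith) hx
      rcases eq_or_lt_of_le hx0 with hxz | hxpos
      · -- x = 0 : then d*l = 1 and ρ = (1/d) • 1
        have hdl : (d : ℝ) * l = 1 := le_antisymm (by linarith) hlge
        have heigs : ∀ i, hherm.eigenvalues i = l := by
          intro i
          have hsum0 : ∑ i, (l - hherm.eigenvalues i) = 0 := by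
            rw [Finset.sum_sub_distrib, htrR]
            simp [mul_comm] at hdl ⊢
            linarith [hdl]
          have := (Finset.sum_eq_zero_iff_of_nonneg
            (fun i _ => by linarith [hle i] : ∀ i ∈ Finset.univ, 0 ≤ l - hherm.eigenvalues i)).mp
            hsum0 i (Finset.mem_univ i)
          linarith
        have hρeq : ρ = (l : ℂ) • (1 : Matrix (Fin d) (Fin d) ℂ) :=
          eq_smul_one_of_eigs_const hherm heigs
        have hlC : (l : ℂ) = 1 / (d : ℂ) := by
          rw [eq_div_iff dC]
          have : (d : ℝ) * l = 1 := hdl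
          push_cast
          rw [mul_comm]
          exact_mod_cast this
        refine ⟨hx0, (1 / (d : ℂ)) • 1, ⟨?_, ?_⟩, ?_⟩
        · have : ((1 / d : ℝ) : ℂ) = 1 / (d : ℂ) := by push_cast; ring
          rw [← this]
          simpa using psd_smul (Matrix.PosSemidef.one) (by positivity : (0:ℝ) ≤ 1/d)
        · rw [Matrix.trace_smul, Matrix.trace_one]
          simp [dC]
        · rw [← hxz]
          push_cast
          rw [hρeq, hlC]
          simp
      · -- x > 0
        set c : ℝ := (1 + x) / d with hc
        have hcl : ∀ i, hherm.eigenvalues i ≤ c := by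
          intro i
          have : l ≤ c := by
            rw [hc, le_div_iff₀ dpos]
            linarith
          linarith [hle i]
        have hpsd := smul_one_sub_psd hherm hcl
        have hxC : (x : ℂ) ≠ 0 := by exact_mod_cast hxpos.ne'
        refine ⟨hx0, ((x : ℂ)⁻¹) • ((c : ℂ) • 1 - ρ), ⟨?_, ?_⟩, ?_⟩
        · have : ((x⁻¹ : ℝ) : ℂ) = (x : ℂ)⁻¹ := by push_cast; ring
          rw [← this]
          exact psd_smul hpsd (by positivity)
        · rw [Matrix.trace_smul, Matrix.trace_sub, Matrix.trace_smul, Matrix.trace_one, hρ.2]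
          simp only [smul_eq_mul, nsmul_eq_mul, Fintype.card_fin]
          have hcd : (c : ℂ) * (d : ℂ) = 1 + (x : ℂ) := by
            rw [hc]
            push_cast
            field_simp
          rw [hcd]
          field_simp
          ring
        · have h1x : (1 + (x : ℂ)) ≠ 0 := by
            intro h
            have : (1 + x : ℝ) = 0 := by exact_mod_cast h
            linarith
          rw [smul_smul, mul_inv_cancel₀ hxC, one_smul]
          have : ρ + ((c : ℂ) • 1 - ρ) = (c : ℂ) • (1 : Matrix (Fin d) (Fin d) ℂ) := by abel
          rw [this, smul_smul]
          congr 1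
          rw [hc]
          push_cast
          field_simp
  rw [hS, csInf_Ici]
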